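/- For any 3×3 real matrix F with det F > 0, the quantity tr((FᵀF − I₃)²) equals the squared Frobenius norm |||FᵀF − I₃|||², and this is greater than or equal to dist(F, SO(3))², where dist(F, SO(3)) = inf over R ∈ SO(3) of |||F − R|||. -/

import Mathlib

open Matrix

noncomputable def frobSq (A : Matrix (Fin 3) (Fin 3) ℝ) : ℝ := ∑ i, ∑ j, (A i j)^2
noncomputable def frob (A : Matrix (Fin 3) (Fin 3) ℝ) : ℝ := Real.sqrt (frobSq A)
def IsSO (R : Matrix (Fin 3) (Fin 3) ℝ) : Prop := Rᵀ * R = 1 ∧ R.det = 1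

lemma frobSq_nonneg (A : Matrix (Fin 3) (Fin 3) ℝ) : 0 ≤ frobSq A :=
  Finset.sum_nonneg fun _ _ => Finset.sum_nonneg fun _ _ => sq_nonneg _

lemma ct_eq_t (A : Matrix (Fin 3) (Fin 3) ℝ) : Aᴴ = Aᵀ := by
  ext i j; simp [Matrix.conjTranspose_apply]

lemma frobSq_eq_trace (A : Matrix (Fin 3) (Fin 3) ℝ) : frobSq A = (Aᵀ * A).trace := by
  rw [frobSq, Matrix.trace]
  simp only [Matrix.diag, Matrix.mul_apply, Matrix.transpose_apply, sq]
  exact Finset.sum_comm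

lemma trace_psd_nonneg (P : Matrix (Fin 3) (Fin 3) ℝ) (hP : P.PosSemidef) :
    0 ≤ P.trace := by
  exact hP.trace_nonneg

lemma trace_mul_psd_nonneg {M N : Matrix (Fin 3) (Fin 3) ℝ}
    (hM : M.PosSemidef) (hN : N.PosSemidef) : 0 ≤ (M * N).trace := by
  obtain ⟨B, rfl⟩ : ∃ B : Matrix (Fin 3) (Fin 3) ℝ, M = Bᴴ * B := by
    open scoped MatrixOrder in
    obtain ⟨B, hB⟩ := CStarAlgebra.nonneg_iff_eq_star_mul_self.mp hM.nonneg
    exact ⟨B, hB⟩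
  rw [Matrix.mul_assoc, Matrix.trace_mul_comm]
  exact trace_psd_nonneg _ (hN.mul_mul_conjTranspose_same B)

theorem stmt1 (F : Matrix (Fin 3) (Fin 3) ℝ) (hF : 0 < F.det) :
    ((Fᵀ * F - 1) * (Fᵀ * F - 1)).trace = frobSq (Fᵀ * F - 1) ∧
    (sInf ((fun R => frob (F - R)) '' {R | IsSO R}))^2 ≤ frobSq (Fᵀ * F - 1) := by
  have hdet : F.det ≠ 0 := ne_of_gt hF
  have hCsymm : (Fᵀ * F - 1)ᵀ = Fᵀ * F - 1 := by
    simp [Matrix.transpose_sub, Matrix.transpose_mul]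
  have hC : (Fᵀ * F).PosSemidef := by
    have := Matrix.posSemidef_conjTranspose_mul_self F
    rwa [ct_eq_t] at this
  constructor
  · rw [frobSq_eq_trace, hCsymm]
  -- setup polar decomposition
  open scoped MatrixOrder in
  set U := CFC.sqrt (Fᵀ * F) with hUdef
  have hU : U.PosSemidef := by
    open scoped MatrixOrder in exact (CFC.sqrt_nonneg _).posSemidef
  have hUsq : U * U = Fᵀ * F := by
    open scoped MatrixOrder in exact CFC.sqrt_mul_sqrt_self _ hC.nonneg
  have hUt : Uᵀ = U := by rw [← ct_eq_t]; exact hU.1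
  have hCpd : (Fᵀ * F).PosDef := by
    refine .of_dotProduct_mulVec_pos hC.1 fun x hx => lt_of_le_of_ne (hC.dotProduct_mulVec_nonneg x) fun h => hx ?_
    have h0 : (Fᵀ * F) *ᵥ x = 0 := (hC.dotProduct_mulVec_zero_iff x).mp h.symm
    have hFx : F *ᵥ x = 0 := by
      have h1 : Fᵀ *ᵥ (F *ᵥ x) = 0 := by rwa [Matrix.mulVec_mulVec]
      have h2 : (F *ᵥ x) ⬝ᵥ (F *ᵥ x) = 0 := by
        have : x ⬝ᵥ (Fᵀ *ᵥ (F *ᵥ x)) = 0 := by rw [h1, dotProduct_zero]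
        rwa [Matrix.dotProduct_mulVec, Matrix.vecMul_transpose] at this
      exact dotProduct_self_eq_zero.mp h2
    have hinj : Function.Injective (F.mulVec) :=
      Matrix.mulVec_injective_iff_isUnit.mpr ((Matrix.isUnit_iff_isUnit_det F).mpr hdet.isUnit)
    exact hinj (show F.mulVec x = F.mulVec 0 by rw [Matrix.mulVec_zero]; exact hFx)
  have hUpd : U.PosDef := by
    refine .of_dotProduct_mulVec_pos hU.1 fun x hx => lt_of_le_of_ne (hU.dotProduct_mulVec_nonneg x) fun h => ?_
    have h0 : U *ᵥ x = 0 := (hU.dotProduct_mulVec_zero_iff x).mp h.symm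
    have h1 : (Fᵀ * F) *ᵥ x = 0 := by
      rw [← hUsq, ← Matrix.mulVec_mulVec, h0, Matrix.mulVec_zero]
    have := hCpd.dotProduct_mulVec_pos hx
    rw [h1, dotProduct_zero] at this
    exact lt_irrefl 0 this
  have hUdet : 0 < U.det := hUpd.det_pos
  have hUunit : IsUnit U.det := hUdet.ne'.isUnit
  have hUinv : U⁻¹ * U = 1 := Matrix.nonsing_inv_mul U hUunit
  have hUinv' : U * U⁻¹ = 1 := Matrix.mul_nonsing_inv U hUunit
  set R := F * U⁻¹ with hRdef
  have hRt : Rᵀ * R = 1 := by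
    rw [hRdef, Matrix.transpose_mul, Matrix.transpose_nonsing_inv, hUt]
    calc U⁻¹ * Fᵀ * (F * U⁻¹) = U⁻¹ * (Fᵀ * F) * U⁻¹ := by
          rw [Matrix.mul_assoc, Matrix.mul_assoc, Matrix.mul_assoc]
      _ = U⁻¹ * (U * U) * U⁻¹ := by rw [hUsq]
      _ = (U⁻¹ * U) * (U * U⁻¹) := by rw [Matrix.mul_assoc, Matrix.mul_assoc, Matrix.mul_assoc]
      _ = 1 := by rw [hUinv, hUinv', one_mul]
  have hRdetpos : 0 < R.det := by
    rw [hRdef, Matrix.det_mul, Matrix.det_nonsing_inv]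
    rw [Ring.inverse_eq_inv]
    exact mul_pos hF (inv_pos.mpr hUdet)
  have hRdet : R.det = 1 := by
    have hsq : R.det * R.det = 1 := by
      have := congrArg Matrix.det hRt
      rwa [Matrix.det_mul, Matrix.det_transpose, Matrix.det_one] at this
    have hfac : (R.det - 1) * (R.det + 1) = 0 := by linear_combination hsq
    rcases mul_eq_zero.mp hfac with h | h
    · linarith
    · linarith
  have hRSO : IsSO R := ⟨hRt, hRdet⟩
  have hFR : F - R = R * (U - 1) := by
    rw [Matrix.mul_sub, Matrix.mul_one, hRdef, Matrix.mul_assoc, hUinv, Matrix.mul_one]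
  have hUsymm : (U - 1)ᵀ = U - 1 := by simp [Matrix.transpose_sub, hUt]
  have hinv : frobSq (F - R) = frobSq (U - 1) := by
    rw [hFR, frobSq_eq_trace, frobSq_eq_trace, Matrix.transpose_mul, Matrix.mul_assoc,
      ← Matrix.mul_assoc Rᵀ, hRt, Matrix.one_mul]
  have hM : ((U - 1) * (U - 1)).PosSemidef := by
    have := Matrix.posSemidef_conjTranspose_mul_self (U - 1)
    rwa [ct_eq_t, hUsymm] at this
  have hN : (U * U + U + U).PosSemidef := ((hUsq ▸ hC).add hU).add hU
  have key : frobSq (U - 1) ≤ frobSq (Fᵀ * F - 1) := by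
    rw [frobSq_eq_trace, frobSq_eq_trace, hUsymm, hCsymm, ← hUsq]
    have hexp : (U * U - 1) * (U * U - 1)
        = (U - 1) * (U - 1) + (U - 1) * (U - 1) * (U * U + U + U) := by
      noncomm_ring
    rw [hexp, Matrix.trace_add]
    have := trace_mul_psd_nonneg hM hN
    linarith
  -- sInf part
  set S := (fun R => frob (F - R)) '' {R | IsSO R} with hSdef
  have h1SO : IsSO (1 : Matrix (Fin 3) (Fin 3) ℝ) := ⟨by simp, by simp⟩
  have hne : S.Nonempty := ⟨frob (F - 1), 1, h1SO, rfl⟩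
  have hlb : ∀ y ∈ S, (0:ℝ) ≤ y := by
    rintro y ⟨A, -, rfl⟩; exact Real.sqrt_nonneg _
  have hbdd : BddBelow S := ⟨0, hlb⟩
  have h1 : sInf S ≤ frob (F - R) := csInf_le hbdd ⟨R, hRSO, rfl⟩
  have h0 : 0 ≤ sInf S := le_csInf hne hlb
  calc (sInf S)^2 ≤ (frob (F - R))^2 := pow_le_pow_left₀ h0 h1 2
    _ = frobSq (F - R) := Real.sq_sqrt (frobSq_nonneg _)
    _ = frobSq (U - 1) := hinv
    _ ≤ frobSq (Fᵀ * F - 1) := key
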